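/- Suppose some convergent is critical with respect to L. Then there exist sequences (k_j)_{j≥1} and (r_j)_{j≥1} of nonnegative integers, strictly increasing in both arguments, such that for every j ≥ 1 the convergent s_{k_j}/t_{k_j} is critical with respect to 2^{r_j} L but not with respect to 2^{r_j+1} L; here, for r ≥ 0, 's_k/t_k is critical with respect to 2^r L' means k ≤ 2^r L − 1, s_k ≡ 3 (mod 4) and 2^{m+r+e} divides t_k. -/

import Mathlib

/-- If some convergent is critical with respect to `L`, there are strictly increasing
sequences `(kseq j)` and `(rseq j)` such that `s (kseq j) / t (kseq j)` is critical with
respect to `2^(rseq j) L` but not with respect to `2^(rseq j + 1) L`. -/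
theorem exists_increasing_critical_sequence
    (a s t : ℤ → ℤ) (l : ℕ) (hl : 1 ≤ l)
    (ha_pos : ∀ k : ℤ, 0 ≤ k → 0 < a k)
    (ha_per : ∀ k : ℤ, 0 ≤ k → a (k + l) = a k)
    (hs_neg : s (-1) = 1) (ht_neg : t (-1) = 0)
    (hs_zero : s 0 = a 0) (ht_zero : t 0 = 1)
    (hs_rec : ∀ k : ℤ, 1 ≤ k → s k = a k * s (k - 1) + s (k - 2))
    (ht_rec : ∀ k : ℤ, 1 ≤ k → t k = a k * t (k - 1) + t (k - 2))
    (L : ℕ) (hL_pos : 0 < L) (hL_even : Even L) (hL_mul : l ∣ L)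
    (hD : s ((L : ℤ) - 1) ≡ 1 [ZMOD 4] ∧ s ((L : ℤ) - 2) ≡ 0 [ZMOD 4] ∧
          t ((L : ℤ) - 1) ≡ 0 [ZMOD 4] ∧ t ((L : ℤ) - 2) ≡ 1 [ZMOD 4])
    (hJpar : ∀ k : ℤ, 0 ≤ k → t (k + L) ≡ t k [ZMOD 2])
    (hJper : ∀ k : ℤ, 0 ≤ k → Odd (t k) →
      jacobiSym (s (k + L)) (t (k + L)).toNat = jacobiSym (s k) (t k).toNat)
    (m : ℕ) (hm : 2 ≤ m) (x y u v : ℤ)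
    (hDU : s ((L : ℤ) - 1) = 1 + 2 ^ m * x ∧ s ((L : ℤ) - 2) = 2 ^ m * y ∧
           t ((L : ℤ) - 1) = 2 ^ m * u ∧ t ((L : ℤ) - 2) = 1 + 2 ^ m * v)
    (hUodd : Odd x ∨ Odd y ∨ Odd u ∨ Odd v)
    (e : ℕ) (u' : ℤ) (hu_ne : u ≠ 0) (hu : u = 2 ^ e * u') (hu'_odd : Odd u')
    (hcrit : ∃ k : ℤ, 0 ≤ k ∧ k ≤ (L : ℤ) - 1 ∧ s k ≡ 3 [ZMOD 4] ∧
      (2 ^ (m + e) : ℤ) ∣ t k) :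
    ∃ kseq rseq : ℕ → ℕ, StrictMono kseq ∧ StrictMono rseq ∧
      ∀ j : ℕ,
        ((kseq j : ℤ) ≤ 2 ^ (rseq j) * (L : ℤ) - 1 ∧ s (kseq j) ≡ 3 [ZMOD 4] ∧
          (2 ^ (m + rseq j + e) : ℤ) ∣ t (kseq j)) ∧
        ¬ ((kseq j : ℤ) ≤ 2 ^ (rseq j + 1) * (L : ℤ) - 1 ∧ s (kseq j) ≡ 3 [ZMOD 4] ∧
            (2 ^ (m + (rseq j + 1) + e) : ℤ) ∣ t (kseq j)) := by
  classical
  -- periodicity for any multiple of l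
  have han : ∀ N : ℕ, l ∣ N → ∀ k : ℤ, 0 ≤ k → a (k + N) = a k := by
    intro N hNl
    obtain ⟨c, rfl⟩ := hNl
    induction c with
    | zero => intro k hk; simp
    | succ c ih =>
      intro k hk
      have h1 : ((l * (c + 1) : ℕ) : ℤ) = ((l * c : ℕ) : ℤ) + (l : ℤ) := by push_cast; ring
      have h2 := ha_per (k + ((l * c : ℕ) : ℤ)) (by positivity)
      calc a (k + ((l * (c + 1) : ℕ) : ℤ)) = a (k + ((l * c : ℕ) : ℤ) + (l : ℤ)) := by
            rw [h1]; ring_nf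
        _ = a (k + ((l * c : ℕ) : ℤ)) := h2
        _ = a k := ih k hk
  -- positivity of t
  have ht_pos : ∀ k : ℤ, 0 ≤ k → 1 ≤ t k := by
    have key : ∀ n : ℕ, 1 ≤ t (n : ℤ) := by
      intro n
      induction n using Nat.strong_induction_on with
      | _ n ih =>
        match n with
        | 0 => simpa using ht_zero.ge
        | 1 =>
          have h := ht_rec 1 le_rfl
          have ha1 := ha_pos 1 (by norm_num)
          norm_num at h
          rw [ht_zero, ht_neg] at h
          simp only [Nat.cast_one]
          nlinarith
        | (n + 2) =>
          have h := ht_rec ((n : ℤ) + 2) (by omega)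
          have ha2 := ha_pos ((n : ℤ) + 2) (by omega)
          have e1 : (n : ℤ) + 2 - 1 = ((n + 1 : ℕ) : ℤ) := by push_cast; ring
          have e2 : (n : ℤ) + 2 - 2 = ((n : ℕ) : ℤ) := by push_cast; ring
          rw [e1, e2] at h
          have i1 := ih (n + 1) (by omega)
          have i2 := ih n (by omega)
          rw [show ((n + 2 : ℕ) : ℤ) = (n : ℤ) + 2 from by push_cast; ring]
          have hb : (1 : ℤ) ≤ a ((n : ℤ) + 2) := ha2
          have hprod : (1 : ℤ) * 1 ≤ a ((n : ℤ) + 2) * t ((n + 1 : ℕ) : ℤ) :=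
            mul_le_mul hb i1 (by norm_num) (by linarith)
          linarith
    intro k hk
    have := key k.toNat
    rwa [Int.toNat_of_nonneg hk] at this
  -- the shift relation
  have shift : ∀ N : ℕ, l ∣ N → 1 ≤ N → ∀ k : ℤ, -1 ≤ k →
      s (k + N) = s ((N : ℤ) - 1) * s k + s ((N : ℤ) - 2) * t k ∧
      t (k + N) = t ((N : ℤ) - 1) * s k + t ((N : ℤ) - 2) * t k := by
    intro N hNl hN1
    have haN := han N hNl
    have key : ∀ n : ℕ, ∀ k : ℤ, k + 1 = (n : ℤ) →
        s (k + N) = s ((N : ℤ) - 1) * s k + s ((N : ℤ) - 2) * t k ∧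
        t (k + N) = t ((N : ℤ) - 1) * s k + t ((N : ℤ) - 2) * t k := by
      intro n
      induction n using Nat.strong_induction_on with
      | _ n ih =>
        intro k hk
        match n, hk with
        | 0, hk =>
          have hkk : k = -1 := by push_cast at hk; omega
          subst hkk
          rw [hs_neg, ht_neg]
          constructor <;> · rw [show (-1 : ℤ) + N = (N : ℤ) - 1 from by ring]; ring
        | 1, hk =>
          have hkk : k = 0 := by push_cast at hk; omega
          subst hkk
          have hN1' : (1 : ℤ) ≤ (N : ℤ) := by exact_mod_cast hN1
          have hsN := hs_rec (N : ℤ) hN1'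
          have htN := ht_rec (N : ℤ) hN1'
          have haN0 := haN 0 le_rfl
          rw [zero_add] at haN0
          rw [show (0 : ℤ) + (N : ℤ) = (N : ℤ) from by ring]
          rw [hsN, htN, hs_zero, ht_zero, haN0]
          constructor <;> ring
        | (n + 2), hk =>
          have hk1 : 1 ≤ k := by push_cast at hk; omega
          obtain ⟨ih1s, ih1t⟩ := ih (n + 1) (by omega) (k - 1) (by push_cast at hk ⊢; omega)
          obtain ⟨ih2s, ih2t⟩ := ih n (by omega) (k - 2) (by push_cast at hk ⊢; omega)
          have hkN : (1 : ℤ) ≤ k + N := by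
            have : (0 : ℤ) ≤ (N : ℤ) := by positivity
            omega
          have hrecs := hs_rec (k + N) hkN
          have hrect := ht_rec (k + N) hkN
          have haK := haN k (by omega)
          have e1 : k + (N : ℤ) - 1 = (k - 1) + (N : ℤ) := by ring
          have e2 : k + (N : ℤ) - 2 = (k - 2) + (N : ℤ) := by ring
          rw [e1, e2, haK, ih1s, ih2s] at hrecs
          rw [e1, e2, haK, ih1t, ih2t] at hrect
          have hsk := hs_rec k hk1
          have htk := ht_rec k hk1
          constructor
          · rw [hrecs, hsk, htk]; ring
          · rw [hrect, hsk, htk]; ring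
    intro k hk
    exact key (k + 1).toNat k (by omega)
  -- matrix data at each level r
  have hdata : ∀ r : ℕ, ∃ X Y U V w : ℤ,
      s (2 ^ r * (L : ℤ) - 1) = 1 + 2 ^ (m + r) * X ∧
      s (2 ^ r * (L : ℤ) - 2) = 2 ^ (m + r) * Y ∧
      t (2 ^ r * (L : ℤ) - 1) = 2 ^ (m + r) * U ∧
      t (2 ^ r * (L : ℤ) - 2) = 1 + 2 ^ (m + r) * V ∧
      U = 2 ^ e * w ∧ Odd w := by
    intro r
    induction r with
    | zero =>
      refine ⟨x, y, u, v, u', ?_, ?_, ?_, ?_, hu, hu'_odd⟩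
      · simpa using hDU.1
      · simpa using hDU.2.1
      · simpa using hDU.2.2.1
      · simpa using hDU.2.2.2
    | succ r ih =>
      obtain ⟨X, Y, U, V, w, h1, h2, h3, h4, h5, h6⟩ := ih
      obtain ⟨p, hp⟩ : ∃ p, m + r = p + 2 := ⟨m + r - 2, by omega⟩
      set N : ℕ := 2 ^ r * L with hN
      have hNl : l ∣ N := Dvd.dvd.mul_left hL_mul (2 ^ r)
      have hN1 : 1 ≤ N := Nat.one_le_iff_ne_zero.mpr (by positivity)
      have hNZ : ((N : ℕ) : ℤ) = 2 ^ r * (L : ℤ) := by rw [hN]; push_cast; ring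
      have hN1Z : (1 : ℤ) ≤ ((N : ℕ) : ℤ) := by exact_mod_cast hN1
      obtain ⟨hsa, hta⟩ := shift N hNl hN1 ((N : ℤ) - 1) (by omega)
      obtain ⟨hsb, htb⟩ := shift N hNl hN1 ((N : ℤ) - 2) (by omega)
      rw [hNZ] at hsa hta hsb htb
      simp only [h1, h2, h3, h4] at hsa hta hsb htb
      have hidx1 : 2 ^ (r + 1) * (L : ℤ) - 1 = (2 ^ r * (L : ℤ) - 1) + 2 ^ r * (L : ℤ) := by
        ring
      have hidx2 : 2 ^ (r + 1) * (L : ℤ) - 2 = (2 ^ r * (L : ℤ) - 2) + 2 ^ r * (L : ℤ) := by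
        ring
      have hm1 : m + (r + 1) = p + 3 := by omega
      refine ⟨X + 2 * 2 ^ p * (X ^ 2 + Y * U),
              Y + 2 * 2 ^ p * (X * Y + Y * V),
              U * (1 + 2 * 2 ^ p * (X + V)),
              V + 2 * 2 ^ p * (U * Y + V ^ 2),
              w * (1 + 2 * 2 ^ p * (X + V)), ?_, ?_, ?_, ?_, ?_, ?_⟩
      · rw [hidx1, hsa, hp, hm1]; ring
      · rw [hidx2, hsb, hp, hm1]; ring
      · rw [hidx1, hta, hp, hm1]; ring
      · rw [hidx2, htb, hp, hm1]; ring
      · rw [h5]; ring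
      · refine h6.mul ?_
        have h7 : Even ((2 * 2 ^ p) * (X + V)) := ⟨2 ^ p * (X + V), by ring⟩
        have h8 := h7.add_one
        rwa [add_comm] at h8
  -- the key step lemma
  have step : ∀ r : ℕ, ∀ k : ℤ, 0 ≤ k → s k ≡ 3 [ZMOD 4] → ((2 : ℤ) ^ (m + r + e)) ∣ t k →
      (s (k + 2 ^ r * (L : ℤ)) ≡ 3 [ZMOD 4]) ∧
      ∃ c : ℤ, Odd c ∧ t (k + 2 ^ r * (L : ℤ)) = t k + 2 ^ (m + r + e) * c := by
    intro r k hk0 hs3 htdvd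
    obtain ⟨X, Y, U, V, w, h1, h2, h3, h4, h5, h6⟩ := hdata r
    obtain ⟨p, hp⟩ : ∃ p, m + r = p + 2 := ⟨m + r - 2, by omega⟩
    set N : ℕ := 2 ^ r * L with hN
    have hNl : l ∣ N := Dvd.dvd.mul_left hL_mul (2 ^ r)
    have hN1 : 1 ≤ N := Nat.one_le_iff_ne_zero.mpr (by positivity)
    have hNZ : ((N : ℕ) : ℤ) = 2 ^ r * (L : ℤ) := by rw [hN]; push_cast; ring
    obtain ⟨hsk, htk⟩ := shift N hNl hN1 k (by omega)
    rw [hNZ] at hsk htk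
    rw [h1, h2] at hsk
    rw [h3, h4, h5] at htk
    obtain ⟨t1, ht1⟩ := htdvd
    have hsodd : Odd (s k) := by
      have hd := Int.ModEq.dvd hs3
      obtain ⟨j, hj⟩ := hd
      exact ⟨1 - 2 * j, by linarith⟩
    constructor
    · have hd : s (k + 2 ^ r * (L : ℤ)) - s k = 4 * (2 ^ p * (X * s k + Y * t k)) := by
        rw [hsk, hp]; ring
      have hmod : s k ≡ s (k + 2 ^ r * (L : ℤ)) [ZMOD 4] :=
        Int.modEq_iff_dvd.mpr ⟨2 ^ p * (X * s k + Y * t k), hd⟩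
      exact hmod.symm.trans hs3
    · refine ⟨w * s k + 2 ^ (m + r) * (V * t1), ?_, ?_⟩
      · refine (h6.mul hsodd).add_even ?_
        have h2e : Even ((2 : ℤ) ^ (m + r)) := ⟨2 * 2 ^ p, by rw [hp]; ring⟩
        exact h2e.mul_right _
      · rw [htk, ht1]; ring
  -- the recursively defined critical sequence
  obtain ⟨k₀, hk₀0, hk₀L, hk₀s, hk₀t⟩ := hcrit
  set K : ℕ → ℤ := fun n => Nat.rec (motive := fun _ => ℤ) k₀
    (fun r Kr => if (2 : ℤ) ^ (m + r + 1 + e) ∣ t Kr then Kr else Kr + 2 ^ r * (L : ℤ)) n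
    with hK
  have hKsucc : ∀ r, K (r + 1) =
      if (2 : ℤ) ^ (m + r + 1 + e) ∣ t (K r) then K r else K r + 2 ^ r * (L : ℤ) :=
    fun r => rfl
  have inv : ∀ r : ℕ, 0 ≤ K r ∧ K r ≤ 2 ^ r * (L : ℤ) - 1 ∧ s (K r) ≡ 3 [ZMOD 4] ∧
      ((2 : ℤ) ^ (m + r + e)) ∣ t (K r) := by
    intro r
    induction r with
    | zero =>
      refine ⟨hk₀0, by show k₀ ≤ 2 ^ 0 * (L : ℤ) - 1; simpa using hk₀L, hk₀s, by show (2 : ℤ) ^ (m + 0 + e) ∣ t k₀; simpa using hk₀t⟩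
    | succ r ih =>
      obtain ⟨h0, hb, h3, hdvd⟩ := ih
      have hLpos : (0 : ℤ) < 2 ^ r * (L : ℤ) := by positivity
      have hpow : (2 : ℤ) ^ (r + 1) * (L : ℤ) = 2 ^ r * (L : ℤ) + 2 ^ r * (L : ℤ) := by ring
      rw [hKsucc r]
      by_cases hdd : (2 : ℤ) ^ (m + r + 1 + e) ∣ t (K r)
      · rw [if_pos hdd]
        refine ⟨h0, by linarith, h3, ?_⟩
        have : m + (r + 1) + e = m + r + 1 + e := by omega
        rwa [this]
      · rw [if_neg hdd]
        obtain ⟨hsnew, c, hcodd, htnew⟩ := step r (K r) h0 h3 hdvd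
        obtain ⟨t1, ht1⟩ := hdvd
        have ht1odd : Odd t1 := by
          rcases Int.even_or_odd t1 with he | ho
          · exfalso
            obtain ⟨d, hd⟩ := he
            exact hdd ⟨d, by rw [ht1, hd]; ring⟩
          · exact ho
        obtain ⟨d, hd⟩ : Even (t1 + c) := ht1odd.add_odd hcodd
        refine ⟨by linarith, by linarith, hsnew, ⟨d, ?_⟩⟩
        rw [htnew, ht1]
        have : m + (r + 1) + e = m + r + e + 1 := by omega
        rw [this]
        linear_combination (2 : ℤ) ^ (m + r + e) * hd
  have hKmono : Monotone K := by
    apply monotone_nat_of_le_succ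
    intro r
    rw [hKsucc r]
    split
    · exact le_rfl
    · have : (0 : ℤ) < 2 ^ r * (L : ℤ) := by positivity
      linarith
  set p : ℕ → Prop := fun r => ¬ (2 : ℤ) ^ (m + r + 1 + e) ∣ t (K r) with hp
  have hSinf : (setOf p).Infinite := by
    by_contra hfin
    rw [Set.not_infinite] at hfin
    obtain ⟨R, hR⟩ := hfin.bddAbove
    have hconst : ∀ j : ℕ, K (R + 1 + j) = K (R + 1) := by
      intro j
      induction j with
      | zero => rfl
      | succ j ih =>
        have hdd : (2 : ℤ) ^ (m + (R + 1 + j) + 1 + e) ∣ t (K (R + 1 + j)) := by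
          by_contra hc
          have hmem : (R + 1 + j) ∈ setOf p := hc
          have := hR hmem
          omega
        have : K (R + 1 + (j + 1)) = K (R + 1 + j) := by
          rw [show R + 1 + (j + 1) = (R + 1 + j) + 1 from rfl, hKsucc, if_pos hdd]
        rw [this, ih]
    have hT1 : 1 ≤ t (K (R + 1)) := ht_pos _ (inv (R + 1)).1
    set T : ℤ := t (K (R + 1)) with hT
    have hdvdT : (2 : ℤ) ^ (m + (R + 1 + T.toNat) + e) ∣ T := by
      have := (inv (R + 1 + T.toNat)).2.2.2
      rwa [hconst T.toNat] at this
    have h2 : (2 : ℤ) ^ (m + (R + 1 + T.toNat) + e) ≤ T := Int.le_of_dvd (by omega) hdvdT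
    have h3 : T < 2 ^ T.toNat := by
      calc T = (T.toNat : ℤ) := (Int.toNat_of_nonneg (by omega)).symm
        _ < 2 ^ T.toNat := by exact_mod_cast Nat.lt_two_pow_self (n := T.toNat)
    have h4 : (2 : ℤ) ^ T.toNat ≤ 2 ^ (m + (R + 1 + T.toNat) + e) :=
      pow_le_pow_right₀ (by norm_num) (by omega)
    linarith
  refine ⟨fun j => (K (Nat.nth p j)).toNat, Nat.nth p, ?_, Nat.nth_strictMono hSinf, ?_⟩
  · intro j j' hjj
    have h1 : Nat.nth p j < Nat.nth p j' := Nat.nth_strictMono hSinf hjj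
    have hmem : p (Nat.nth p j) := Nat.nth_mem_of_infinite hSinf j
    have h2 : K (Nat.nth p j) < K (Nat.nth p j + 1) := by
      rw [hKsucc, if_neg hmem]
      have : (0 : ℤ) < 2 ^ (Nat.nth p j) * (L : ℤ) := by positivity
      linarith
    have h3 : K (Nat.nth p j + 1) ≤ K (Nat.nth p j') := hKmono (show Nat.nth p j + 1 ≤ Nat.nth p j' by omega)
    have h4 := (inv (Nat.nth p j)).1
    have h5 := (inv (Nat.nth p j')).1
    show (K (Nat.nth p j)).toNat < (K (Nat.nth p j')).toNat
    omega
  · intro j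
    have hmem : p (Nat.nth p j) := Nat.nth_mem_of_infinite hSinf j
    obtain ⟨h0, hb, h3, hdvd⟩ := inv (Nat.nth p j)
    have hcast : (((K (Nat.nth p j)).toNat : ℕ) : ℤ) = K (Nat.nth p j) :=
      Int.toNat_of_nonneg h0
    constructor
    · refine ⟨?_, ?_, ?_⟩
      · rw [hcast]; exact hb
      · rw [hcast]; exact h3
      · rw [hcast]; exact hdvd
    · rintro ⟨-, -, hd⟩
      rw [hcast] at hd
      apply hmem
      have : m + (Nat.nth p j + 1) + e = m + Nat.nth p j + 1 + e := by omega
      rwa [this] at hd
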